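/- Under the stochastic compliance class IV assumptions ((Y(1),Y(0),U) independent of Z; (Y(1),Y(0)) conditionally independent of D given (Z,U); Y = D·Y(1)+(1−D)·Y(0); and E[w(U)] ≠ 0), the Wald ratio identifies the strength-of-IV weighted average treatment effect: (E[Y|Z=1] − E[Y|Z=0]) / (P(D=1|Z=1) − P(D=1|Z=0)) = E[(Y(1)−Y(0))·w(U)] / E[w(U)], where w(u) = P(D=1|Z=1,U=u) − P(D=1|Z=0,U=u). -/

import Mathlib

open Finset
open scoped Classical

/-- Probability of an event `A` under mass function `p` on a finite sample space. -/
noncomputable def prb {Ω : Type*} [Fintype Ω] (p : Ω → ℝ) (A : Ω → Prop) : ℝ :=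
  ∑ ω, if A ω then p ω else 0

/-- Expectation of a real random variable `X` under mass function `p`. -/
noncomputable def exv {Ω : Type*} [Fintype Ω] (p : Ω → ℝ) (X : Ω → ℝ) : ℝ :=
  ∑ ω, p ω * X ω

/-- Conditional probability `P(A | B)`. -/
noncomputable def cpr {Ω : Type*} [Fintype Ω] (p : Ω → ℝ) (A B : Ω → Prop) : ℝ :=
  prb p (fun ω => A ω ∧ B ω) / prb p B

/-- Conditional expectation `E[X | B]`. -/
noncomputable def cex {Ω : Type*} [Fintype Ω] (p : Ω → ℝ) (X : Ω → ℝ) (B : Ω → Prop) : ℝ :=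
  (∑ ω, if B ω then p ω * X ω else 0) / prb p B

attribute [local instance 2000] Classical.propDecidable

section aux
variable {Ω ι : Type*} [Fintype Ω] [Fintype ι]

lemma prb_congr (p : Ω → ℝ) {A B : Ω → Prop} (h : ∀ ω, A ω ↔ B ω) :
    prb p A = prb p B :=
  Finset.sum_congr rfl fun ω _ => by simp [h ω]

lemma prb_of_cpr (p : Ω → ℝ) (A B : Ω → Prop) (hB : prb p B ≠ 0) :
    prb p (fun ω => A ω ∧ B ω) = cpr p A B * prb p B := by
  unfold cpr; rw [div_mul_cancel₀ _ hB]

lemma fiber_sum (U : Ω → ι) (f : Ω → ℝ) :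
    ∑ ω, f ω = ∑ u : ι, ∑ ω, if U ω = u then f ω else 0 := by
  rw [Finset.sum_comm]
  exact Finset.sum_congr rfl fun ω _ => by simp

lemma ite_nest (c d : Prop) [Decidable c] [Decidable d] (x : ℝ) :
    (if c then (if d then x else 0) else 0) = if d ∧ c then x else 0 := by
  split_ifs <;> tauto

lemma ite_split (c : Prop) [Decidable c] (a b : ℝ) :
    (if c then a + b else 0) = (if c then a else 0) + (if c then b else 0) := by
  split_ifs <;> simp

lemma decomp (p : Ω → ℝ) (Y1 Y0 : Ω → ℝ) (A : Ω → Prop) (v : ℝ → ℝ → ℝ) :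
    ∑ ω, (if A ω then p ω * v (Y1 ω) (Y0 ω) else 0) =
    ∑ t ∈ Finset.univ.image (fun ω => (Y1 ω, Y0 ω)),
      v t.1 t.2 * prb p (fun ω => Y1 ω = t.1 ∧ Y0 ω = t.2 ∧ A ω) := by
  unfold prb
  simp_rw [Finset.mul_sum, mul_ite, mul_zero]
  rw [Finset.sum_comm]
  refine Finset.sum_congr rfl fun ω _ => ?_
  by_cases hA : A ω
  · rw [Finset.sum_eq_single (Y1 ω, Y0 ω)]
    · simp [hA, mul_comm]
    · intro t _ hne
      rw [if_neg]
      rintro ⟨h1, h2, -⟩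
      exact hne (Prod.ext h1.symm h2.symm)
    · intro h
      exact absurd (Finset.mem_image_of_mem _ (Finset.mem_univ ω)) h
  · simp [hA]

end aux

attribute [local instance 2000] Classical.propDecidable

/-- the Wald ratio identifies the SIVWATE. -/
theorem stmt3 {Ω ι : Type*} [Fintype Ω] [Fintype ι]
    (p : Ω → ℝ) (hp : ∀ ω, 0 ≤ p ω) (hpsum : ∑ ω, p ω = 1)
    (Z D Y Y1 Y0 : Ω → ℝ) (U : Ω → ι)
    (hZbin : ∀ ω, Z ω = 0 ∨ Z ω = 1) (hDbin : ∀ ω, D ω = 0 ∨ D ω = 1)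
    (hYobs : ∀ ω, Y ω = D ω * Y1 ω + (1 - D ω) * Y0 ω)
    (hpos : ∀ (z : ℝ) (u : ι), (z = 0 ∨ z = 1) →
      0 < prb p (fun ω => Z ω = z ∧ U ω = u))
    (hindep : ∀ (y1 y0 : ℝ) (u : ι) (z : ℝ),
      prb p (fun ω => Y1 ω = y1 ∧ Y0 ω = y0 ∧ U ω = u ∧ Z ω = z) =
        prb p (fun ω => Y1 ω = y1 ∧ Y0 ω = y0 ∧ U ω = u) * prb p (fun ω => Z ω = z))
    (hcind : ∀ (y1 y0 d z : ℝ) (u : ι),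
      cpr p (fun ω => Y1 ω = y1 ∧ Y0 ω = y0 ∧ D ω = d) (fun ω => Z ω = z ∧ U ω = u) =
        cpr p (fun ω => Y1 ω = y1 ∧ Y0 ω = y0) (fun ω => Z ω = z ∧ U ω = u) *
          cpr p (fun ω => D ω = d) (fun ω => Z ω = z ∧ U ω = u))
    (w : ι → ℝ)
    (hw : ∀ u, w u = cpr p (fun ω => D ω = 1) (fun ω => Z ω = 1 ∧ U ω = u) -
                    cpr p (fun ω => D ω = 1) (fun ω => Z ω = 0 ∧ U ω = u))
    (hZ1 : 0 < prb p (fun ω => Z ω = 1)) (hZ0 : 0 < prb p (fun ω => Z ω = 0))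
    (hEw : exv p (fun ω => w (U ω)) ≠ 0) :
    (cex p Y (fun ω => Z ω = 1) - cex p Y (fun ω => Z ω = 0)) /
        (cpr p (fun ω => D ω = 1) (fun ω => Z ω = 1) -
          cpr p (fun ω => D ω = 1) (fun ω => Z ω = 0)) =
      exv p (fun ω => (Y1 ω - Y0 ω) * w (U ω)) / exv p (fun ω => w (U ω)) := by
  set img : Finset (ℝ × ℝ) := Finset.univ.image (fun ω => (Y1 ω, Y0 ω)) with himg
  set Pu : ι → ℝ := fun u => prb p (fun ω => U ω = u) with hPudef
  set q : ℝ → ι → ℝ :=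
    fun z u => cpr p (fun ω => D ω = 1) (fun ω => Z ω = z ∧ U ω = u) with hqdef
  set G : ι → ℝ := fun u => ∑ ω, if U ω = u then p ω * (Y1 ω - Y0 ω) else 0 with hGdef
  set H : ι → ℝ := fun u => ∑ ω, if U ω = u then p ω * Y0 ω else 0 with hHdef
  have hpzu_ne : ∀ (z : ℝ) (u : ι), (z = 0 ∨ z = 1) →
      prb p (fun ω => Z ω = z ∧ U ω = u) ≠ 0 := fun z u hz => (hpos z u hz).ne'
  -- Pu as a sum over potential-outcome values
  have hPuim : ∀ u, Pu u = ∑ t ∈ img,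
      prb p (fun ω => Y1 ω = t.1 ∧ Y0 ω = t.2 ∧ U ω = u) := by
    intro u
    have h := decomp p Y1 Y0 (fun ω => U ω = u) (fun _ _ => 1)
    simp only [mul_one, one_mul] at h
    rw [hPudef, himg]
    exact h
  -- P(Z=z, U=u) = P(U=u) P(Z=z)
  have hPzu : ∀ (z : ℝ) (u : ι), prb p (fun ω => Z ω = z ∧ U ω = u) =
      Pu u * prb p (fun ω => Z ω = z) := by
    intro z u
    have h := decomp p Y1 Y0 (fun ω => Z ω = z ∧ U ω = u) (fun _ _ => 1)
    simp only [mul_one, one_mul] at h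
    calc prb p (fun ω => Z ω = z ∧ U ω = u)
        = ∑ t ∈ img, prb p (fun ω => Y1 ω = t.1 ∧ Y0 ω = t.2 ∧ (Z ω = z ∧ U ω = u)) := by
          rw [himg]; exact h
      _ = ∑ t ∈ img, prb p (fun ω => Y1 ω = t.1 ∧ Y0 ω = t.2 ∧ U ω = u) *
            prb p (fun ω => Z ω = z) := by
          refine Finset.sum_congr rfl fun t _ => ?_
          rw [prb_congr (A := fun ω => Y1 ω = t.1 ∧ Y0 ω = t.2 ∧ (Z ω = z ∧ U ω = u))
            (B := fun ω => Y1 ω = t.1 ∧ Y0 ω = t.2 ∧ U ω = u ∧ Z ω = z) p (fun ω => by tauto),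
            hindep t.1 t.2 u z]
      _ = Pu u * prb p (fun ω => Z ω = z) := by rw [hPuim u, Finset.sum_mul]
  -- P(D=1, Z=z, U=u) = q z u * Pu u * P(Z=z)
  have hDzu : ∀ (z : ℝ) (u : ι), (z = 0 ∨ z = 1) →
      prb p (fun ω => D ω = 1 ∧ Z ω = z ∧ U ω = u) =
      q z u * (Pu u * prb p (fun ω => Z ω = z)) := by
    intro z u hz
    calc prb p (fun ω => D ω = 1 ∧ Z ω = z ∧ U ω = u)
        = cpr p (fun ω => D ω = 1) (fun ω => Z ω = z ∧ U ω = u) *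
            prb p (fun ω => Z ω = z ∧ U ω = u) :=
          prb_of_cpr p (fun ω => D ω = 1) (fun ω => Z ω = z ∧ U ω = u) (hpzu_ne z u hz)
      _ = q z u * (Pu u * prb p (fun ω => Z ω = z)) := by rw [hPzu z u]
  -- G as a sum over values
  have hGim : ∀ u, G u = ∑ t ∈ img,
      (t.1 - t.2) * prb p (fun ω => Y1 ω = t.1 ∧ Y0 ω = t.2 ∧ U ω = u) := by
    intro u
    rw [hGdef, himg]
    exact decomp p Y1 Y0 (fun ω => U ω = u) (fun a b => a - b)
  -- key step for the numerator, D-part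
  have hS : ∀ (z : ℝ) (u : ι), (z = 0 ∨ z = 1) →
      (∑ ω, if Z ω = z ∧ U ω = u then p ω * (D ω * (Y1 ω - Y0 ω)) else 0) =
      q z u * prb p (fun ω => Z ω = z) * G u := by
    intro z u hz
    have step2 : ∀ t : ℝ × ℝ,
        prb p (fun ω => Y1 ω = t.1 ∧ Y0 ω = t.2 ∧ (D ω = 1 ∧ Z ω = z ∧ U ω = u)) =
        q z u * prb p (fun ω => Z ω = z) *
          prb p (fun ω => Y1 ω = t.1 ∧ Y0 ω = t.2 ∧ U ω = u) := by
      intro t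
      have e2 := prb_of_cpr p (fun ω => Y1 ω = t.1 ∧ Y0 ω = t.2 ∧ D ω = 1)
        (fun ω => Z ω = z ∧ U ω = u) (hpzu_ne z u hz)
      have e3 := prb_of_cpr p (fun ω => Y1 ω = t.1 ∧ Y0 ω = t.2)
        (fun ω => Z ω = z ∧ U ω = u) (hpzu_ne z u hz)
      have e5 : cpr p (fun ω => Y1 ω = t.1 ∧ Y0 ω = t.2) (fun ω => Z ω = z ∧ U ω = u) *
          prb p (fun ω => Z ω = z ∧ U ω = u) =
          prb p (fun ω => Y1 ω = t.1 ∧ Y0 ω = t.2 ∧ U ω = u) * prb p (fun ω => Z ω = z) := by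
        rw [← e3,
          prb_congr (A := fun ω => (Y1 ω = t.1 ∧ Y0 ω = t.2) ∧ (Z ω = z ∧ U ω = u))
            (B := fun ω => Y1 ω = t.1 ∧ Y0 ω = t.2 ∧ U ω = u ∧ Z ω = z) p (fun ω => by tauto),
          hindep t.1 t.2 u z]
      calc prb p (fun ω => Y1 ω = t.1 ∧ Y0 ω = t.2 ∧ (D ω = 1 ∧ Z ω = z ∧ U ω = u))
          = prb p (fun ω => (Y1 ω = t.1 ∧ Y0 ω = t.2 ∧ D ω = 1) ∧ (Z ω = z ∧ U ω = u)) :=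
            prb_congr p (fun ω => by tauto)
        _ = cpr p (fun ω => Y1 ω = t.1 ∧ Y0 ω = t.2 ∧ D ω = 1)
              (fun ω => Z ω = z ∧ U ω = u) * prb p (fun ω => Z ω = z ∧ U ω = u) := e2
        _ = cpr p (fun ω => Y1 ω = t.1 ∧ Y0 ω = t.2) (fun ω => Z ω = z ∧ U ω = u) *
              cpr p (fun ω => D ω = 1) (fun ω => Z ω = z ∧ U ω = u) *
              prb p (fun ω => Z ω = z ∧ U ω = u) := by rw [hcind t.1 t.2 1 z u]
        _ = (cpr p (fun ω => Y1 ω = t.1 ∧ Y0 ω = t.2) (fun ω => Z ω = z ∧ U ω = u) *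
              prb p (fun ω => Z ω = z ∧ U ω = u)) *
              cpr p (fun ω => D ω = 1) (fun ω => Z ω = z ∧ U ω = u) := by ring
        _ = (prb p (fun ω => Y1 ω = t.1 ∧ Y0 ω = t.2 ∧ U ω = u) *
              prb p (fun ω => Z ω = z)) *
              cpr p (fun ω => D ω = 1) (fun ω => Z ω = z ∧ U ω = u) := by rw [e5]
        _ = q z u * prb p (fun ω => Z ω = z) *
              prb p (fun ω => Y1 ω = t.1 ∧ Y0 ω = t.2 ∧ U ω = u) := by
            simp only [hqdef]; ring
    calc (∑ ω, if Z ω = z ∧ U ω = u then p ω * (D ω * (Y1 ω - Y0 ω)) else 0)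
        = ∑ ω, if D ω = 1 ∧ Z ω = z ∧ U ω = u then p ω * (Y1 ω - Y0 ω) else 0 := by
          refine Finset.sum_congr rfl fun ω _ => ?_
          rcases hDbin ω with h | h <;> simp [h]
      _ = ∑ t ∈ img, (t.1 - t.2) *
            prb p (fun ω => Y1 ω = t.1 ∧ Y0 ω = t.2 ∧ (D ω = 1 ∧ Z ω = z ∧ U ω = u)) := by
          rw [himg]
          exact decomp p Y1 Y0 (fun ω => D ω = 1 ∧ Z ω = z ∧ U ω = u) (fun a b => a - b)
      _ = ∑ t ∈ img, q z u * prb p (fun ω => Z ω = z) * ((t.1 - t.2) *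
            prb p (fun ω => Y1 ω = t.1 ∧ Y0 ω = t.2 ∧ U ω = u)) := by
          refine Finset.sum_congr rfl fun t _ => ?_
          rw [step2 t]; ring
      _ = q z u * prb p (fun ω => Z ω = z) * ∑ t ∈ img, (t.1 - t.2) *
            prb p (fun ω => Y1 ω = t.1 ∧ Y0 ω = t.2 ∧ U ω = u) :=
          (Finset.mul_sum _ _ _).symm
      _ = q z u * prb p (fun ω => Z ω = z) * G u := by rw [hGim u]
  -- key step for the numerator, Y0-part
  have hR : ∀ (z : ℝ) (u : ι),
      (∑ ω, if Z ω = z ∧ U ω = u then p ω * Y0 ω else 0) =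
      prb p (fun ω => Z ω = z) * H u := by
    intro z u
    calc (∑ ω, if Z ω = z ∧ U ω = u then p ω * Y0 ω else 0)
        = ∑ t ∈ img, t.2 * prb p (fun ω => Y1 ω = t.1 ∧ Y0 ω = t.2 ∧ (Z ω = z ∧ U ω = u)) := by
          rw [himg]
          exact decomp p Y1 Y0 (fun ω => Z ω = z ∧ U ω = u) (fun a b => b)
      _ = ∑ t ∈ img, prb p (fun ω => Z ω = z) *
            (t.2 * prb p (fun ω => Y1 ω = t.1 ∧ Y0 ω = t.2 ∧ U ω = u)) := by
          refine Finset.sum_congr rfl fun t _ => ?_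
          rw [prb_congr (A := fun ω => Y1 ω = t.1 ∧ Y0 ω = t.2 ∧ (Z ω = z ∧ U ω = u))
            (B := fun ω => Y1 ω = t.1 ∧ Y0 ω = t.2 ∧ U ω = u ∧ Z ω = z) p (fun ω => by tauto),
            hindep t.1 t.2 u z]
          ring
      _ = prb p (fun ω => Z ω = z) * ∑ t ∈ img, t.2 *
            prb p (fun ω => Y1 ω = t.1 ∧ Y0 ω = t.2 ∧ U ω = u) := (Finset.mul_sum _ _ _).symm
      _ = prb p (fun ω => Z ω = z) * H u := by
          congr 1
          rw [hHdef, himg]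
          exact (decomp p Y1 Y0 (fun ω => U ω = u) (fun a b => b)).symm
  -- conditional expectation of Y
  have hcex : ∀ (z : ℝ), (z = 0 ∨ z = 1) → prb p (fun ω => Z ω = z) ≠ 0 →
      cex p Y (fun ω => Z ω = z) = (∑ u, H u) + ∑ u, q z u * G u := by
    intro z hzb hz
    have key : (∑ ω, if Z ω = z then p ω * Y ω else 0) =
        prb p (fun ω => Z ω = z) * ((∑ u, H u) + ∑ u, q z u * G u) := by
      calc (∑ ω, if Z ω = z then p ω * Y ω else 0)
          = ∑ u, ∑ ω, if U ω = u then (if Z ω = z then p ω * Y ω else 0) else 0 :=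
            fiber_sum U _
        _ = ∑ u, ∑ ω, if Z ω = z ∧ U ω = u then
              p ω * Y0 ω + p ω * (D ω * (Y1 ω - Y0 ω)) else 0 := by
            refine Finset.sum_congr rfl fun u _ => Finset.sum_congr rfl fun ω _ => ?_
            rw [ite_nest, show p ω * Y ω = p ω * Y0 ω + p ω * (D ω * (Y1 ω - Y0 ω)) from by
              rw [hYobs ω]; ring]
        _ = ∑ u, ((∑ ω, if Z ω = z ∧ U ω = u then p ω * Y0 ω else 0) +
              ∑ ω, if Z ω = z ∧ U ω = u then p ω * (D ω * (Y1 ω - Y0 ω)) else 0) := by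
            refine Finset.sum_congr rfl fun u _ => ?_
            simp_rw [ite_split]
            rw [Finset.sum_add_distrib]
        _ = ∑ u, (prb p (fun ω => Z ω = z) * H u +
              q z u * prb p (fun ω => Z ω = z) * G u) := by
            refine Finset.sum_congr rfl fun u _ => ?_
            rw [hR z u, hS z u hzb]
        _ = prb p (fun ω => Z ω = z) * ((∑ u, H u) + ∑ u, q z u * G u) := by
            rw [mul_add, Finset.mul_sum, Finset.mul_sum, ← Finset.sum_add_distrib]
            exact Finset.sum_congr rfl fun u _ => by ring
    unfold cex
    rw [key, mul_div_cancel_left₀ _ hz]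
  -- conditional probability of D = 1
  have hcprD : ∀ (z : ℝ), (z = 0 ∨ z = 1) → prb p (fun ω => Z ω = z) ≠ 0 →
      cpr p (fun ω => D ω = 1) (fun ω => Z ω = z) = ∑ u, q z u * Pu u := by
    intro z hzb hz
    have key : prb p (fun ω => D ω = 1 ∧ Z ω = z) =
        prb p (fun ω => Z ω = z) * ∑ u, q z u * Pu u := by
      calc prb p (fun ω => D ω = 1 ∧ Z ω = z)
          = ∑ u, ∑ ω, if U ω = u then (if D ω = 1 ∧ Z ω = z then p ω else 0) else 0 :=
            fiber_sum U _
        _ = ∑ u, prb p (fun ω => D ω = 1 ∧ Z ω = z ∧ U ω = u) := by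
            refine Finset.sum_congr rfl fun u _ => ?_
            unfold prb
            refine Finset.sum_congr rfl fun ω _ => ?_
            rw [ite_nest]
            exact if_congr (by tauto) rfl rfl
        _ = ∑ u, q z u * (Pu u * prb p (fun ω => Z ω = z)) :=
            Finset.sum_congr rfl fun u _ => hDzu z u hzb
        _ = prb p (fun ω => Z ω = z) * ∑ u, q z u * Pu u := by
            rw [Finset.mul_sum]
            exact Finset.sum_congr rfl fun u _ => by ring
    unfold cpr
    rw [key, mul_div_cancel_left₀ _ hz]
  -- expectations in terms of fibers of U
  have hEwPu : exv p (fun ω => w (U ω)) = ∑ u, w u * Pu u := by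
    calc exv p (fun ω => w (U ω))
        = ∑ u, ∑ ω, if U ω = u then p ω * w (U ω) else 0 := fiber_sum U _
      _ = ∑ u, w u * Pu u := by
          refine Finset.sum_congr rfl fun u _ => ?_
          simp only [hPudef]
          unfold prb
          rw [Finset.mul_sum]
          refine Finset.sum_congr rfl fun ω _ => ?_
          split_ifs with h
          · rw [h]; ring
          · ring
  have hEwG : exv p (fun ω => (Y1 ω - Y0 ω) * w (U ω)) = ∑ u, w u * G u := by
    calc exv p (fun ω => (Y1 ω - Y0 ω) * w (U ω))
        = ∑ u, ∑ ω, if U ω = u then p ω * ((Y1 ω - Y0 ω) * w (U ω)) else 0 := fiber_sum U _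
      _ = ∑ u, w u * G u := by
          refine Finset.sum_congr rfl fun u _ => ?_
          simp only [hGdef]
          rw [Finset.mul_sum]
          refine Finset.sum_congr rfl fun ω _ => ?_
          split_ifs with h
          · rw [h]; ring
          · ring
  -- put everything together
  rw [hcex 1 (Or.inr rfl) hZ1.ne', hcex 0 (Or.inl rfl) hZ0.ne',
    hcprD 1 (Or.inr rfl) hZ1.ne', hcprD 0 (Or.inl rfl) hZ0.ne', hEwPu, hEwG]
  have hwq : ∀ u, w u = q 1 u - q 0 u := fun u => by rw [hw u]
  congr 1
  · calc ((∑ u, H u) + ∑ u, q 1 u * G u) - ((∑ u, H u) + ∑ u, q 0 u * G u)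
        = (∑ u, q 1 u * G u) - ∑ u, q 0 u * G u := by ring
      _ = ∑ u, (q 1 u * G u - q 0 u * G u) := (Finset.sum_sub_distrib _ _).symm
      _ = ∑ u, w u * G u := Finset.sum_congr rfl fun u _ => by rw [hwq u]; ring
  · calc (∑ u, q 1 u * Pu u) - ∑ u, q 0 u * Pu u
        = ∑ u, (q 1 u * Pu u - q 0 u * Pu u) := (Finset.sum_sub_distrib _ _).symm
      _ = ∑ u, w u * Pu u := Finset.sum_congr rfl fun u _ => by rw [hwq u]; ring
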